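/- Correctness of pierce: for every LL(1) focused syntax (s, c) and every token t with kind t = k and k ∈ First s, and for all token sequences ts and values v: Matches (unfocus (elem k, pierce k s c)) (t :: ts) v if and only if Matches (unfocus (s, c)) (t :: ts) v. -/

import Mathlib

set_option autoImplicit false

/-- Context-free syntaxes (value-aware context-free expressions). -/
inductive Syn (Token Kind : Type) (Var : Type → Type) : Type → Type 1 where
  | elem (k : Kind) : Syn Token Kind Var Token
  | fail {A : Type} : Syn Token Kind Var A
  | eps {A : Type} (v : A) : Syn Token Kind Var A
  | disj {A : Type} (s₁ s₂ : Syn Token Kind Var A) : Syn Token Kind Var A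
  | seqn {A B : Type} (s₁ : Syn Token Kind Var A) (s₂ : Syn Token Kind Var B) :
      Syn Token Kind Var (A × B)
  | map {A B : Type} (f : A → B) (s : Syn Token Kind Var A) : Syn Token Kind Var B
  | var {A : Type} (x : Var A) : Syn Token Kind Var A

section

variable {Token Kind : Type} {Var : Type → Type}
variable (kd : Token → Kind) (env : ∀ A : Type, Var A → Syn Token Kind Var A)

/-- Semantics of syntaxes. -/
inductive Matches : ∀ {A : Type}, Syn Token Kind Var A → List Token → A → Prop where
  | elem {k : Kind} {t : Token} (h : kd t = k) : Matches (Syn.elem k) [t] t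
  | eps {A : Type} (v : A) : Matches (Syn.eps v) [] v
  | disjL {A : Type} {s₁ s₂ : Syn Token Kind Var A} {ts : List Token} {v : A} :
      Matches s₁ ts v → Matches (Syn.disj s₁ s₂) ts v
  | disjR {A : Type} {s₁ s₂ : Syn Token Kind Var A} {ts : List Token} {v : A} :
      Matches s₂ ts v → Matches (Syn.disj s₁ s₂) ts v
  | seqn {A B : Type} {s₁ : Syn Token Kind Var A} {s₂ : Syn Token Kind Var B}
      {ts₁ ts₂ : List Token} {v₁ : A} {v₂ : B} :
      Matches s₁ ts₁ v₁ → Matches s₂ ts₂ v₂ →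
      Matches (Syn.seqn s₁ s₂) (ts₁ ++ ts₂) (v₁, v₂)
  | map {A B : Type} (f : A → B) {s : Syn Token Kind Var A} {ts : List Token} {v : A} :
      Matches s ts v → Matches (Syn.map f s) ts (f v)
  | var {A : Type} (x : Var A) {ts : List Token} {v : A} :
      Matches (env A x) ts v → Matches (Syn.var x) ts v

/-- Productivity. -/
inductive Productive : ∀ {A : Type}, Syn Token Kind Var A → Prop where
  | eps {A : Type} (v : A) : Productive (Syn.eps v)
  | elem (k : Kind) : Productive (Syn.elem k)
  | disjL {A : Type} {s₁ s₂ : Syn Token Kind Var A} :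
      Productive s₁ → Productive (Syn.disj s₁ s₂)
  | disjR {A : Type} {s₁ s₂ : Syn Token Kind Var A} :
      Productive s₂ → Productive (Syn.disj s₁ s₂)
  | seqn {A B : Type} {s₁ : Syn Token Kind Var A} {s₂ : Syn Token Kind Var B} :
      Productive s₁ → Productive s₂ → Productive (Syn.seqn s₁ s₂)
  | map {A B : Type} (f : A → B) {s : Syn Token Kind Var A} :
      Productive s → Productive (Syn.map f s)
  | var {A : Type} (x : Var A) : Productive (env A x) → Productive (Syn.var x)

/-- Nullability, with associated value. -/
inductive Nullable : ∀ {A : Type}, Syn Token Kind Var A → A → Prop where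
  | eps {A : Type} (v : A) : Nullable (Syn.eps v) v
  | disjL {A : Type} {s₁ s₂ : Syn Token Kind Var A} {v : A} :
      Nullable s₁ v → Nullable (Syn.disj s₁ s₂) v
  | disjR {A : Type} {s₁ s₂ : Syn Token Kind Var A} {v : A} :
      Nullable s₂ v → Nullable (Syn.disj s₁ s₂) v
  | seqn {A B : Type} {s₁ : Syn Token Kind Var A} {s₂ : Syn Token Kind Var B} {v₁ : A} {v₂ : B} :
      Nullable s₁ v₁ → Nullable s₂ v₂ → Nullable (Syn.seqn s₁ s₂) (v₁, v₂)
  | map {A B : Type} (f : A → B) {s : Syn Token Kind Var A} {v : A} :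
      Nullable s v → Nullable (Syn.map f s) (f v)
  | var {A : Type} (x : Var A) {v : A} : Nullable (env A x) v → Nullable (Syn.var x) v

/-- First sets: `InFirst env k s` means `k ∈ First s`. -/
inductive InFirst : ∀ {A : Type}, Kind → Syn Token Kind Var A → Prop where
  | elem (k : Kind) : InFirst k (Syn.elem k)
  | disjL {A : Type} {k : Kind} {s₁ s₂ : Syn Token Kind Var A} :
      InFirst k s₁ → InFirst k (Syn.disj s₁ s₂)
  | disjR {A : Type} {k : Kind} {s₁ s₂ : Syn Token Kind Var A} :
      InFirst k s₂ → InFirst k (Syn.disj s₁ s₂)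
  | seqnL {A B : Type} {k : Kind} {s₁ : Syn Token Kind Var A} {s₂ : Syn Token Kind Var B} :
      InFirst k s₁ → Productive env s₂ → InFirst k (Syn.seqn s₁ s₂)
  | seqnR {A B : Type} {k : Kind} {s₁ : Syn Token Kind Var A} {s₂ : Syn Token Kind Var B}
      {v : A} : Nullable env s₁ v → InFirst k s₂ → InFirst k (Syn.seqn s₁ s₂)
  | map {A B : Type} {k : Kind} (f : A → B) {s : Syn Token Kind Var A} :
      InFirst k s → InFirst k (Syn.map f s)
  | var {A : Type} {k : Kind} (x : Var A) : InFirst k (env A x) → InFirst k (Syn.var x)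

/-- Should-not-follow sets: `InSNF env k s` means `k ∈ ShouldNotFollow s`. -/
inductive InSNF : ∀ {A : Type}, Kind → Syn Token Kind Var A → Prop where
  | disjL {A : Type} {k : Kind} {s₁ s₂ : Syn Token Kind Var A} :
      InSNF k s₁ → InSNF k (Syn.disj s₁ s₂)
  | disjR {A : Type} {k : Kind} {s₁ s₂ : Syn Token Kind Var A} :
      InSNF k s₂ → InSNF k (Syn.disj s₁ s₂)
  | disjFN {A : Type} {k : Kind} {s₁ s₂ : Syn Token Kind Var A} {v : A} :
      InFirst env k s₁ → Nullable env s₂ v → InSNF k (Syn.disj s₁ s₂)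
  | disjNF {A : Type} {k : Kind} {s₁ s₂ : Syn Token Kind Var A} {v : A} :
      Nullable env s₁ v → InFirst env k s₂ → InSNF k (Syn.disj s₁ s₂)
  | seqnL {A B : Type} {k : Kind} {s₁ : Syn Token Kind Var A} {s₂ : Syn Token Kind Var B}
      {v : B} : InSNF k s₁ → Nullable env s₂ v → InSNF k (Syn.seqn s₁ s₂)
  | seqnR {A B : Type} {k : Kind} {s₁ : Syn Token Kind Var A} {s₂ : Syn Token Kind Var B} :
      Productive env s₁ → InSNF k s₂ → InSNF k (Syn.seqn s₁ s₂)
  | map {A B : Type} {k : Kind} (f : A → B) {s : Syn Token Kind Var A} :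
      InSNF k s → InSNF k (Syn.map f s)
  | var {A : Type} {k : Kind} (x : Var A) : InSNF k (env A x) → InSNF k (Syn.var x)

/-- LL(1) conflicts. A syntax `s` is LL(1) iff `¬ HasConflict env s`. -/
inductive HasConflict : ∀ {A : Type}, Syn Token Kind Var A → Prop where
  | disjNN {A : Type} {s₁ s₂ : Syn Token Kind Var A} {v₁ v₂ : A} :
      Nullable env s₁ v₁ → Nullable env s₂ v₂ → HasConflict (Syn.disj s₁ s₂)
  | disjFF {A : Type} {s₁ s₂ : Syn Token Kind Var A} {k : Kind} :
      InFirst env k s₁ → InFirst env k s₂ → HasConflict (Syn.disj s₁ s₂)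
  | disjL {A : Type} {s₁ s₂ : Syn Token Kind Var A} :
      HasConflict s₁ → HasConflict (Syn.disj s₁ s₂)
  | disjR {A : Type} {s₁ s₂ : Syn Token Kind Var A} :
      HasConflict s₂ → HasConflict (Syn.disj s₁ s₂)
  | seqnSF {A B : Type} {s₁ : Syn Token Kind Var A} {s₂ : Syn Token Kind Var B} {k : Kind} :
      InSNF env k s₁ → InFirst env k s₂ → HasConflict (Syn.seqn s₁ s₂)
  | seqnL {A B : Type} {s₁ : Syn Token Kind Var A} {s₂ : Syn Token Kind Var B} :
      HasConflict s₁ → HasConflict (Syn.seqn s₁ s₂)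
  | seqnR {A B : Type} {s₁ : Syn Token Kind Var A} {s₂ : Syn Token Kind Var B} :
      HasConflict s₂ → HasConflict (Syn.seqn s₁ s₂)
  | map {A B : Type} (f : A → B) {s : Syn Token Kind Var A} :
      HasConflict s → HasConflict (Syn.map f s)
  | var {A : Type} (x : Var A) : HasConflict (env A x) → HasConflict (Syn.var x)

end

/-- Layers of a context, with above type `A` and below type `B`. -/
inductive Layer (Token Kind : Type) (Var : Type → Type) : Type → Type → Type 1 where
  | apply {A B : Type} (f : A → B) : Layer Token Kind Var A B
  | prepend {A C : Type} (v : C) : Layer Token Kind Var A (C × A)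
  | followBy {A C : Type} (s : Syn Token Kind Var C) : Layer Token Kind Var A (A × C)

/-- Type-aligned contexts (stacks of layers). -/
inductive Ctx (Token Kind : Type) (Var : Type → Type) : Type → Type → Type 1 where
  | nil {A : Type} : Ctx Token Kind Var A A
  | cons {A B C : Type} (l : Layer Token Kind Var A B) (c : Ctx Token Kind Var B C) :
      Ctx Token Kind Var A C

section

variable {Token Kind : Type} {Var : Type → Type}

def Ctx.isNil : ∀ {A B : Type}, Ctx Token Kind Var A B → Bool
  | _, _, Ctx.nil => true
  | _, _, Ctx.cons _ _ => false

/-- Unfocusing a focused syntax. -/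
def unfocus : ∀ {A B : Type}, Syn Token Kind Var A → Ctx Token Kind Var A B →
    Syn Token Kind Var B
  | _, _, s, Ctx.nil => s
  | _, _, s, Ctx.cons (Layer.apply f) c => unfocus (Syn.map f s) c
  | _, _, s, Ctx.cons (Layer.prepend v) c => unfocus (Syn.seqn (Syn.eps v) s) c
  | _, _, s, Ctx.cons (Layer.followBy s') c => unfocus (Syn.seqn s s') c

/-- Focused syntaxes with below type `B`. -/
def Focused (Token Kind : Type) (Var : Type → Type) (B : Type) : Type 1 :=
  (A : Type) × Syn Token Kind Var A × Ctx Token Kind Var A B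

def unfocusF {B : Type} (fs : Focused Token Kind Var B) : Syn Token Kind Var B :=
  unfocus fs.2.1 fs.2.2

def focusF {A : Type} (s : Syn Token Kind Var A) : Focused Token Kind Var A :=
  ⟨A, s, Ctx.nil⟩

/-- Plugging a value into a context. -/
def plug : ∀ {A B : Type}, A → Ctx Token Kind Var A B → Focused Token Kind Var B
  | A, _, v, Ctx.nil => ⟨A, Syn.eps v, Ctx.nil⟩
  | _, _, v, Ctx.cons (Layer.apply f) c => plug (f v) c
  | _, _, v, Ctx.cons (Layer.prepend v') c => plug (v', v) c
  | _, _, v, Ctx.cons (Layer.followBy s) c => ⟨_, s, Ctx.cons (Layer.prepend v) c⟩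

end

section

variable {Token Kind : Type} {Var : Type → Type}
variable (kd : Token → Kind) (env : ∀ A : Type, Var A → Syn Token Kind Var A)

section
variable {Token Kind : Type} {Var : Type → Type}
variable {kd : Token → Kind} {env : ∀ A : Type, Var A → Syn Token Kind Var A}

theorem matches_productive {A : Type} {s : Syn Token Kind Var A} {l : List Token} {v : A}
    (h : Matches kd env s l v) : Productive env s := by
  induction h with
  | elem h => exact Productive.elem _
  | eps v => exact Productive.eps v
  | disjL _ ih => exact Productive.disjL ih
  | disjR _ ih => exact Productive.disjR ih
  | seqn _ _ ih1 ih2 => exact Productive.seqn ih1 ih2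
  | map f _ ih => exact Productive.map f ih
  | var x _ ih => exact Productive.var x ih

theorem nullable_productive {A : Type} {s : Syn Token Kind Var A} {v : A}
    (h : Nullable env s v) : Productive env s := by
  induction h with
  | eps v => exact Productive.eps v
  | disjL _ ih => exact Productive.disjL ih
  | disjR _ ih => exact Productive.disjR ih
  | seqn _ _ ih1 ih2 => exact Productive.seqn ih1 ih2
  | map f _ ih => exact Productive.map f ih
  | var x _ ih => exact Productive.var x ih

theorem matches_nil_nullable {A : Type} {s : Syn Token Kind Var A} {l : List Token} {v : A}
    (h : Matches kd env s l v) (hl : l = []) : Nullable env s v := by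
  induction h with
  | elem h => simp at hl
  | eps v => exact Nullable.eps v
  | disjL _ ih => exact Nullable.disjL (ih hl)
  | disjR _ ih => exact Nullable.disjR (ih hl)
  | seqn _ _ ih1 ih2 =>
    rcases List.append_eq_nil_iff.mp hl with ⟨h1, h2⟩
    exact Nullable.seqn (ih1 h1) (ih2 h2)
  | map f _ ih => exact Nullable.map f (ih hl)
  | var x _ ih => exact Nullable.var x (ih hl)

theorem nullable_matches {A : Type} {s : Syn Token Kind Var A} {v : A}
    (h : Nullable env s v) : Matches kd env s [] v := by
  induction h with
  | eps v => exact Matches.eps v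
  | disjL _ ih => exact Matches.disjL ih
  | disjR _ ih => exact Matches.disjR ih
  | seqn _ _ ih1 ih2 => exact Matches.seqn ih1 ih2
  | map f _ ih => exact Matches.map f ih
  | var x _ ih => exact Matches.var x ih

theorem matches_cons_first {A : Type} {s : Syn Token Kind Var A} {l : List Token} {v : A}
    (h : Matches kd env s l v) (t : Token) (l' : List Token) (hl : l = t :: l') :
    InFirst env (kd t) s := by
  induction h generalizing l' with
  | elem h =>
    obtain ⟨rfl, rfl⟩ : t = _ ∧ l' = [] := by simpa using hl.symm
    rw [h]; exact InFirst.elem _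
  | eps v => simp at hl
  | disjL _ ih => exact InFirst.disjL (ih _ hl)
  | disjR _ ih => exact InFirst.disjR (ih _ hl)
  | seqn h1 h2 ih1 ih2 =>
    rename_i ts₁ ts₂ v₁ v₂
    cases ts₁ with
    | nil => exact InFirst.seqnR (matches_nil_nullable h1 rfl) (ih2 _ hl)
    | cons a ts₁' =>
      obtain ⟨rfl, -⟩ : a = t ∧ ts₁' ++ ts₂ = l' := by simpa using hl
      exact InFirst.seqnL (ih1 _ rfl) (matches_productive h2)
  | map f _ ih => exact InFirst.map f (ih _ hl)
  | var x _ ih => exact InFirst.var x (ih _ hl)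

end

section
variable {Token Kind : Type} {Var : Type → Type}

/-- Inversion motives at `seqn`, to work around dependent elimination failures. -/
def MSeqInv (kd : Token → Kind) (env : ∀ A : Type, Var A → Syn Token Kind Var A) :
    ∀ {C : Type}, Syn Token Kind Var C → List Token → C → Prop
  | _, Syn.seqn s₁ s₂, l, u =>
      ∃ l₁ l₂, l = l₁ ++ l₂ ∧ Matches kd env s₁ l₁ u.1 ∧ Matches kd env s₂ l₂ u.2
  | _, _, _, _ => True

def NSeqInv (env : ∀ A : Type, Var A → Syn Token Kind Var A) :
    ∀ {C : Type}, Syn Token Kind Var C → C → Prop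
  | _, Syn.seqn s₁ s₂, u => Nullable env s₁ u.1 ∧ Nullable env s₂ u.2
  | _, _, _ => True

def PSeqInv (env : ∀ A : Type, Var A → Syn Token Kind Var A) :
    ∀ {C : Type}, Syn Token Kind Var C → Prop
  | _, Syn.seqn s₁ s₂ => Productive env s₁ ∧ Productive env s₂
  | _, _ => True

def FSeqInv (env : ∀ A : Type, Var A → Syn Token Kind Var A) (k : Kind) :
    ∀ {C : Type}, Syn Token Kind Var C → Prop
  | _, Syn.seqn s₁ s₂ =>
      (InFirst env k s₁ ∧ Productive env s₂) ∨ ∃ v, Nullable env s₁ v ∧ InFirst env k s₂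
  | _, _ => True

def SSeqInv (env : ∀ A : Type, Var A → Syn Token Kind Var A) (k : Kind) :
    ∀ {C : Type}, Syn Token Kind Var C → Prop
  | _, Syn.seqn s₁ s₂ =>
      (∃ v, InSNF env k s₁ ∧ Nullable env s₂ v) ∨ (Productive env s₁ ∧ InSNF env k s₂)
  | _, _ => True

def CSeqInv (env : ∀ A : Type, Var A → Syn Token Kind Var A) :
    ∀ {C : Type}, Syn Token Kind Var C → Prop
  | _, Syn.seqn s₁ s₂ =>
      (∃ k, InSNF env k s₁ ∧ InFirst env k s₂) ∨ HasConflict env s₁ ∨ HasConflict env s₂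
  | _, _ => True

variable {kd : Token → Kind} {env : ∀ A : Type, Var A → Syn Token Kind Var A}

theorem matches_inv_aux {A : Type} {s : Syn Token Kind Var A} {l : List Token} {u : A}
    (h : Matches kd env s l u) : MSeqInv kd env s l u := by
  cases h with
  | seqn h1 h2 => exact ⟨_, _, rfl, h1, h2⟩
  | _ => trivial

theorem matches_seqn_inv {A B : Type} {s₁ : Syn Token Kind Var A} {s₂ : Syn Token Kind Var B}
    {l : List Token} {u : A × B} (h : Matches kd env (Syn.seqn s₁ s₂) l u) :
    ∃ l₁ l₂, l = l₁ ++ l₂ ∧ Matches kd env s₁ l₁ u.1 ∧ Matches kd env s₂ l₂ u.2 :=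
  matches_inv_aux h

theorem nullable_inv_aux {A : Type} {s : Syn Token Kind Var A} {u : A}
    (h : Nullable env s u) : NSeqInv env s u := by
  cases h with
  | seqn h1 h2 => exact ⟨h1, h2⟩
  | _ => trivial

theorem nullable_seqn_inv {A B : Type} {s₁ : Syn Token Kind Var A} {s₂ : Syn Token Kind Var B}
    {u : A × B} (h : Nullable env (Syn.seqn s₁ s₂) u) :
    Nullable env s₁ u.1 ∧ Nullable env s₂ u.2 :=
  nullable_inv_aux h

theorem productive_inv_aux {A : Type} {s : Syn Token Kind Var A}
    (h : Productive env s) : PSeqInv env s := by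
  cases h with
  | seqn h1 h2 => exact ⟨h1, h2⟩
  | _ => trivial

theorem productive_seqn_inv {A B : Type} {s₁ : Syn Token Kind Var A} {s₂ : Syn Token Kind Var B}
    (h : Productive env (Syn.seqn s₁ s₂)) : Productive env s₁ ∧ Productive env s₂ :=
  productive_inv_aux h

theorem first_inv_aux {A : Type} {k : Kind} {s : Syn Token Kind Var A}
    (h : InFirst env k s) : FSeqInv env k s := by
  cases h with
  | seqnL h1 h2 => exact Or.inl ⟨h1, h2⟩
  | seqnR h1 h2 => exact Or.inr ⟨_, h1, h2⟩
  | _ => trivial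

theorem first_seqn_inv {A B : Type} {k : Kind} {s₁ : Syn Token Kind Var A}
    {s₂ : Syn Token Kind Var B} (h : InFirst env k (Syn.seqn s₁ s₂)) :
    (InFirst env k s₁ ∧ Productive env s₂) ∨ ∃ v, Nullable env s₁ v ∧ InFirst env k s₂ :=
  first_inv_aux h

theorem snf_inv_aux {A : Type} {k : Kind} {s : Syn Token Kind Var A}
    (h : InSNF env k s) : SSeqInv env k s := by
  cases h with
  | seqnL h1 h2 => exact Or.inl ⟨_, h1, h2⟩
  | seqnR h1 h2 => exact Or.inr ⟨h1, h2⟩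
  | _ => trivial

theorem snf_seqn_inv {A B : Type} {k : Kind} {s₁ : Syn Token Kind Var A}
    {s₂ : Syn Token Kind Var B} (h : InSNF env k (Syn.seqn s₁ s₂)) :
    (∃ v, InSNF env k s₁ ∧ Nullable env s₂ v) ∨ (Productive env s₁ ∧ InSNF env k s₂) :=
  snf_inv_aux h

theorem conflict_inv_aux {A : Type} {s : Syn Token Kind Var A}
    (h : HasConflict env s) : CSeqInv env s := by
  cases h with
  | seqnSF h1 h2 => exact Or.inl ⟨_, h1, h2⟩
  | seqnL h1 => exact Or.inr (Or.inl h1)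
  | seqnR h2 => exact Or.inr (Or.inr h2)
  | _ => trivial

theorem conflict_seqn_inv {A B : Type} {s₁ : Syn Token Kind Var A}
    {s₂ : Syn Token Kind Var B} (h : HasConflict env (Syn.seqn s₁ s₂)) :
    (∃ k, InSNF env k s₁ ∧ InFirst env k s₂) ∨ HasConflict env s₁ ∨ HasConflict env s₂ :=
  conflict_inv_aux h

end
section
variable {Token Kind : Type} {Var : Type → Type}
variable {kd : Token → Kind} {env : ∀ A : Type, Var A → Syn Token Kind Var A}

theorem nullable_unique {A : Type} {s : Syn Token Kind Var A} {u u' : A}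
    (hc : ¬ HasConflict env s) (h1 : Nullable env s u) (h2 : Nullable env s u') : u = u' := by
  induction h1 with
  | eps v => cases h2; rfl
  | disjL h ih =>
    cases h2 with
    | disjL h' => exact ih (fun c => hc (HasConflict.disjL c)) h'
    | disjR h' => exact absurd (HasConflict.disjNN h h') hc
  | disjR h ih =>
    cases h2 with
    | disjL h' => exact absurd (HasConflict.disjNN h' h) hc
    | disjR h' => exact ih (fun c => hc (HasConflict.disjR c)) h'
  | seqn ha hb ih1 ih2 =>
    obtain ⟨ha', hb'⟩ := nullable_seqn_inv h2
    have e1 := ih1 (fun c => hc (HasConflict.seqnL c)) ha'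
    have e2 := ih2 (fun c => hc (HasConflict.seqnR c)) hb'
    obtain ⟨u1, u2⟩ := u'
    exact congrArg₂ Prod.mk e1 e2
  | map f h ih =>
    cases h2 with
    | map _ h' => exact congrArg f (ih (fun c => hc (HasConflict.map f c)) h')
  | var x h ih =>
    cases h2 with
    | var _ h' => exact ih (fun c => hc (HasConflict.var x c)) h'

theorem nullable_first_snf {A : Type} {s : Syn Token Kind Var A} {k : Kind}
    (hf : InFirst env k s) :
    ¬ HasConflict env s → ∀ v : A, Nullable env s v → InSNF env k s := by
  induction hf with
  | elem k => intro _ v hn; cases hn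
  | disjL hf₁ ih =>
    intro hc v hn
    cases hn with
    | disjL hn₁ => exact InSNF.disjL (ih (fun c => hc (HasConflict.disjL c)) _ hn₁)
    | disjR hn₂ => exact InSNF.disjFN hf₁ hn₂
  | disjR hf₂ ih =>
    intro hc v hn
    cases hn with
    | disjL hn₁ => exact InSNF.disjNF hn₁ hf₂
    | disjR hn₂ => exact InSNF.disjR (ih (fun c => hc (HasConflict.disjR c)) _ hn₂)
  | seqnL hf₁ hp₂ ih =>
    intro hc v hn
    obtain ⟨hn₁, hn₂⟩ := nullable_seqn_inv hn
    exact InSNF.seqnL (ih (fun c => hc (HasConflict.seqnL c)) _ hn₁) hn₂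
  | seqnR hn₁ hf₂ ih =>
    intro hc v hn
    obtain ⟨hn₁', hn₂⟩ := nullable_seqn_inv hn
    exact InSNF.seqnR (nullable_productive hn₁')
      (ih (fun c => hc (HasConflict.seqnR c)) _ hn₂)
  | map f hf ih =>
    intro hc v hn
    cases hn with
    | map _ hn => exact InSNF.map f (ih (fun c => hc (HasConflict.map f c)) _ hn)
  | var x hf ih =>
    intro hc v hn
    cases hn with
    | var _ hn => exact InSNF.var x (ih (fun c => hc (HasConflict.var x c)) _ hn)

end

/-- Refinement of the static predicates. -/
def Refines {Token Kind : Type} {Var : Type → Type}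
    (env : ∀ A : Type, Var A → Syn Token Kind Var A) {A : Type}
    (s s' : Syn Token Kind Var A) : Prop :=
  (Productive env s → Productive env s') ∧
  (∀ v, Nullable env s v → Nullable env s' v) ∧
  (∀ k, InFirst env k s → InFirst env k s') ∧
  (∀ k, InSNF env k s → InSNF env k s') ∧
  (HasConflict env s → HasConflict env s')

section
variable {Token Kind : Type} {Var : Type → Type}
variable {kd : Token → Kind} {env : ∀ A : Type, Var A → Syn Token Kind Var A}

theorem refines_map {A B : Type} (f : A → B) {s s' : Syn Token Kind Var A}
    (h : Refines env s s') : Refines env (Syn.map f s) (Syn.map f s') := by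
  obtain ⟨h1, h2, h3, h4, h5⟩ := h
  refine ⟨?_, ?_, ?_, ?_, ?_⟩
  · intro hp; cases hp with | map _ hp => exact Productive.map f (h1 hp)
  · intro v hn; cases hn with | map _ hn => exact Nullable.map f (h2 _ hn)
  · intro k hf; cases hf with | map _ hf => exact InFirst.map f (h3 _ hf)
  · intro k hs; cases hs with | map _ hs => exact InSNF.map f (h4 _ hs)
  · intro hc; cases hc with | map _ hc => exact HasConflict.map f (h5 hc)

theorem refines_prepend {A C : Type} (v : C) {s s' : Syn Token Kind Var A}
    (h : Refines env s s') :
    Refines env (Syn.seqn (Syn.eps v) s) (Syn.seqn (Syn.eps v) s') := by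
  obtain ⟨h1, h2, h3, h4, h5⟩ := h
  refine ⟨?_, ?_, ?_, ?_, ?_⟩
  · intro hp
    obtain ⟨hp1, hp2⟩ := productive_seqn_inv hp
    exact Productive.seqn hp1 (h1 hp2)
  · intro u hn
    obtain ⟨hn1, hn2⟩ := nullable_seqn_inv hn
    obtain ⟨u1, u2⟩ := u
    exact Nullable.seqn hn1 (h2 _ hn2)
  · intro k hf
    rcases first_seqn_inv hf with ⟨hf1, -⟩ | ⟨v0, hn0, hf2⟩
    · cases hf1
    · exact InFirst.seqnR hn0 (h3 _ hf2)
  · intro k hs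
    rcases snf_seqn_inv hs with ⟨v0, hs1, -⟩ | ⟨hp1, hs2⟩
    · cases hs1
    · exact InSNF.seqnR hp1 (h4 _ hs2)
  · intro hc
    rcases conflict_seqn_inv hc with ⟨k, hs1, -⟩ | hc1 | hc2
    · cases hs1
    · cases hc1
    · exact HasConflict.seqnR (h5 hc2)

theorem refines_followBy {A C : Type} (s₂ : Syn Token Kind Var C)
    {s s' : Syn Token Kind Var A} (h : Refines env s s') :
    Refines env (Syn.seqn s s₂) (Syn.seqn s' s₂) := by
  obtain ⟨h1, h2, h3, h4, h5⟩ := h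
  refine ⟨?_, ?_, ?_, ?_, ?_⟩
  · intro hp
    obtain ⟨hp1, hp2⟩ := productive_seqn_inv hp
    exact Productive.seqn (h1 hp1) hp2
  · intro u hn
    obtain ⟨hn1, hn2⟩ := nullable_seqn_inv hn
    obtain ⟨u1, u2⟩ := u
    exact Nullable.seqn (h2 _ hn1) hn2
  · intro k hf
    rcases first_seqn_inv hf with ⟨hf1, hp2⟩ | ⟨v0, hn0, hf2⟩
    · exact InFirst.seqnL (h3 _ hf1) hp2
    · exact InFirst.seqnR (h2 _ hn0) hf2
  · intro k hs
    rcases snf_seqn_inv hs with ⟨v0, hs1, hn2⟩ | ⟨hp1, hs2⟩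
    · exact InSNF.seqnL (h4 _ hs1) hn2
    · exact InSNF.seqnR (h1 hp1) hs2
  · intro hc
    rcases conflict_seqn_inv hc with ⟨k, hs1, hf2⟩ | hc1 | hc2
    · exact HasConflict.seqnSF (h4 _ hs1) hf2
    · exact HasConflict.seqnL (h5 hc1)
    · exact HasConflict.seqnR hc2

theorem refines_unfocus :
    ∀ {A B : Type} {s s' : Syn Token Kind Var A} (c : Ctx Token Kind Var A B),
      Refines env s s' → Refines env (unfocus s c) (unfocus s' c)
  | _, _, _, _, Ctx.nil, h => h
  | _, _, _, _, Ctx.cons (Layer.apply f) c, h => refines_unfocus c (refines_map f h)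
  | _, _, _, _, Ctx.cons (Layer.prepend v) c, h => refines_unfocus c (refines_prepend v h)
  | _, _, _, _, Ctx.cons (Layer.followBy s₂) c, h => refines_unfocus c (refines_followBy s₂ h)

theorem conflict_unfocus :
    ∀ {A B : Type} (s : Syn Token Kind Var A) (c : Ctx Token Kind Var A B),
      HasConflict env s → HasConflict env (unfocus s c)
  | _, _, _, Ctx.nil, h => h
  | _, _, s, Ctx.cons (Layer.apply f) c, h =>
      conflict_unfocus _ c (HasConflict.map f h)
  | _, _, s, Ctx.cons (Layer.prepend v) c, h =>
      conflict_unfocus _ c (HasConflict.seqnR h)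
  | _, _, s, Ctx.cons (Layer.followBy s₂) c, h =>
      conflict_unfocus _ c (HasConflict.seqnL h)

theorem refines_disjL {A : Type} {s₁ s₂ : Syn Token Kind Var A} :
    Refines env s₁ (Syn.disj s₁ s₂) :=
  ⟨Productive.disjL, fun _ => Nullable.disjL, fun _ => InFirst.disjL,
    fun _ => InSNF.disjL, HasConflict.disjL⟩

theorem refines_disjR {A : Type} {s₁ s₂ : Syn Token Kind Var A} :
    Refines env s₂ (Syn.disj s₁ s₂) :=
  ⟨Productive.disjR, fun _ => Nullable.disjR, fun _ => InFirst.disjR,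
    fun _ => InSNF.disjR, HasConflict.disjR⟩

theorem refines_var {A : Type} (x : Var A) :
    Refines env (env A x) (Syn.var x) :=
  ⟨Productive.var x, fun _ => Nullable.var x, fun _ => InFirst.var x,
    fun _ => InSNF.var x, HasConflict.var x⟩

theorem refines_epsSeqn {A C : Type} {s₁ : Syn Token Kind Var A} {v₁ : A}
    (hn₁ : Nullable env s₁ v₁) (s₂ : Syn Token Kind Var C) :
    Refines env (Syn.seqn (Syn.eps v₁) s₂) (Syn.seqn s₁ s₂) := by
  refine ⟨?_, ?_, ?_, ?_, ?_⟩
  · intro hp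
    obtain ⟨-, hp2⟩ := productive_seqn_inv hp
    exact Productive.seqn (nullable_productive hn₁) hp2
  · intro u hn
    obtain ⟨u1, u2⟩ := u
    obtain ⟨hn1, hn2⟩ := nullable_seqn_inv hn
    cases hn1
    exact Nullable.seqn hn₁ hn2
  · intro k hf
    rcases first_seqn_inv hf with ⟨hf1, -⟩ | ⟨v0, -, hf2⟩
    · cases hf1
    · exact InFirst.seqnR hn₁ hf2
  · intro k hs
    rcases snf_seqn_inv hs with ⟨v0, hs1, -⟩ | ⟨-, hs2⟩
    · cases hs1
    · exact InSNF.seqnR (nullable_productive hn₁) hs2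
  · intro hc
    rcases conflict_seqn_inv hc with ⟨k, hs1, -⟩ | hc1 | hc2
    · cases hs1
    · cases hc1
    · exact HasConflict.seqnR hc2

end
/-- Matching of the remainder of a context. -/
inductive Rest {Token Kind : Type} {Var : Type → Type} (kd : Token → Kind)
    (env : ∀ A : Type, Var A → Syn Token Kind Var A) :
    ∀ {A B : Type}, Ctx Token Kind Var A B → List Token → A → B → Prop where
  | nil {A : Type} (v : A) : Rest kd env Ctx.nil [] v v
  | apply {A B C : Type} (f : A → B) {c : Ctx Token Kind Var B C} {l : List Token}
      {u : A} {w : C} : Rest kd env c l (f u) w →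
      Rest kd env (Ctx.cons (Layer.apply f) c) l u w
  | prepend {A D C : Type} (v' : D) {c : Ctx Token Kind Var (D × A) C} {l : List Token}
      {u : A} {w : C} : Rest kd env c l (v', u) w →
      Rest kd env (Ctx.cons (Layer.prepend v') c) l u w
  | followBy {A D C : Type} {s' : Syn Token Kind Var D} {c : Ctx Token Kind Var (A × D) C}
      {l₁ l₂ : List Token} {u : A} {u' : D} {w : C} :
      Matches kd env s' l₁ u' → Rest kd env c l₂ (u, u') w →
      Rest kd env (Ctx.cons (Layer.followBy s') c) (l₁ ++ l₂) u w

def RInv {Token Kind : Type} {Var : Type → Type} (kd : Token → Kind)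
    (env : ∀ A : Type, Var A → Syn Token Kind Var A) :
    ∀ {A B : Type}, Ctx Token Kind Var A B → List Token → A → B → Prop
  | _, _, Ctx.nil, l, u, w => l = [] ∧ u = w
  | _, _, Ctx.cons (Layer.apply f) c, l, u, w => Rest kd env c l (f u) w
  | _, _, Ctx.cons (Layer.prepend v') c, l, u, w => Rest kd env c l (v', u) w
  | _, _, Ctx.cons (Layer.followBy s') c, l, u, w =>
      ∃ l₁ l₂ u', l = l₁ ++ l₂ ∧ Matches kd env s' l₁ u' ∧ Rest kd env c l₂ (u, u') w

section
variable {Token Kind : Type} {Var : Type → Type}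
variable {kd : Token → Kind} {env : ∀ A : Type, Var A → Syn Token Kind Var A}

theorem rest_inv_aux {A B : Type} {c : Ctx Token Kind Var A B} {l : List Token}
    {u : A} {w : B} (h : Rest kd env c l u w) : RInv kd env c l u w := by
  cases h with
  | nil v => exact ⟨rfl, rfl⟩
  | apply f h => exact h
  | prepend v' h => exact h
  | followBy hm h => exact ⟨_, _, _, rfl, hm, h⟩

theorem rest_nil_inv {A : Type} {l : List Token} {u w : A}
    (h : Rest kd env Ctx.nil l u w) : l = [] ∧ u = w := rest_inv_aux h

theorem rest_apply_inv {A B C : Type} {f : A → B} {c : Ctx Token Kind Var B C}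
    {l : List Token} {u : A} {w : C}
    (h : Rest kd env (Ctx.cons (Layer.apply f) c) l u w) : Rest kd env c l (f u) w :=
  rest_inv_aux h

theorem rest_prepend_inv {A D C : Type} {v' : D} {c : Ctx Token Kind Var (D × A) C}
    {l : List Token} {u : A} {w : C}
    (h : Rest kd env (Ctx.cons (Layer.prepend v') c) l u w) : Rest kd env c l (v', u) w :=
  rest_inv_aux h

theorem rest_followBy_inv {A D C : Type} {s' : Syn Token Kind Var D}
    {c : Ctx Token Kind Var (A × D) C} {l : List Token} {u : A} {w : C}
    (h : Rest kd env (Ctx.cons (Layer.followBy s') c) l u w) :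
    ∃ l₁ l₂ u', l = l₁ ++ l₂ ∧ Matches kd env s' l₁ u' ∧ Rest kd env c l₂ (u, u') w :=
  rest_inv_aux h

theorem matches_unfocus_iff :
    ∀ {A B : Type} (s : Syn Token Kind Var A) (c : Ctx Token Kind Var A B)
      (l : List Token) (w : B),
      Matches kd env (unfocus s c) l w ↔
        ∃ l₁ l₂ u, l = l₁ ++ l₂ ∧ Matches kd env s l₁ u ∧ Rest kd env c l₂ u w
  | _, _, s, Ctx.nil, l, w => by
    constructor
    · intro h; exact ⟨l, [], w, (List.append_nil l).symm, h, Rest.nil w⟩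
    · rintro ⟨l₁, l₂, u, rfl, hm, hr⟩
      obtain ⟨rfl, rfl⟩ := rest_nil_inv hr
      simpa [unfocus] using hm
  | _, _, s, Ctx.cons (Layer.apply f) c, l, w => by
    rw [show unfocus s (Ctx.cons (Layer.apply f) c) = unfocus (Syn.map f s) c from rfl,
        matches_unfocus_iff (Syn.map f s) c l w]
    constructor
    · rintro ⟨l₁, l₂, u, rfl, hm, hr⟩
      cases hm with
      | map _ hm => exact ⟨l₁, l₂, _, rfl, hm, Rest.apply f hr⟩
    · rintro ⟨l₁, l₂, u, rfl, hm, hr⟩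
      exact ⟨l₁, l₂, f u, rfl, Matches.map f hm, rest_apply_inv hr⟩
  | _, _, s, Ctx.cons (Layer.prepend v') c, l, w => by
    rw [show unfocus s (Ctx.cons (Layer.prepend v') c)
          = unfocus (Syn.seqn (Syn.eps v') s) c from rfl,
        matches_unfocus_iff (Syn.seqn (Syn.eps v') s) c l w]
    constructor
    · rintro ⟨l₁, l₂, u, rfl, hm, hr⟩
      obtain ⟨u1, u2⟩ := u
      obtain ⟨la, lb, rfl, h1, h2⟩ := matches_seqn_inv hm
      obtain ⟨rfl, rfl⟩ : la = [] ∧ u1 = v' := by cases h1; exact ⟨rfl, rfl⟩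
      exact ⟨lb, l₂, u2, rfl, h2, Rest.prepend _ hr⟩
    · rintro ⟨l₁, l₂, u, rfl, hm, hr⟩
      exact ⟨l₁, l₂, (v', u), rfl, Matches.seqn (Matches.eps v') hm, rest_prepend_inv hr⟩
  | _, _, s, Ctx.cons (Layer.followBy s₂) c, l, w => by
    rw [show unfocus s (Ctx.cons (Layer.followBy s₂) c)
          = unfocus (Syn.seqn s s₂) c from rfl,
        matches_unfocus_iff (Syn.seqn s s₂) c l w]
    constructor
    · rintro ⟨l₁, l₂, u, rfl, hm, hr⟩
      obtain ⟨u1, u2⟩ := u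
      obtain ⟨la, lb, rfl, h1, h2⟩ := matches_seqn_inv hm
      exact ⟨la, lb ++ l₂, u1, by rw [List.append_assoc], h1, Rest.followBy h2 hr⟩
    · rintro ⟨l₁, l₂, u, rfl, hm, hr⟩
      obtain ⟨lb, l₂', u', rfl, hmb, hr'⟩ := rest_followBy_inv hr
      exact ⟨l₁ ++ lb, l₂', (u, u'), by rw [List.append_assoc], Matches.seqn hm hmb, hr'⟩

theorem matches_unfocus_mono {A B : Type} {s s' : Syn Token Kind Var A}
    (c : Ctx Token Kind Var A B)
    (h : ∀ l w, Matches kd env s l w → Matches kd env s' l w) {l : List Token} {w : B}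
    (hm : Matches kd env (unfocus s c) l w) : Matches kd env (unfocus s' c) l w := by
  rw [matches_unfocus_iff] at hm ⊢
  obtain ⟨l₁, l₂, u, rfl, hm, hr⟩ := hm
  exact ⟨l₁, l₂, u, rfl, h _ _ hm, hr⟩

theorem snf_rest_conflict {k : Kind} :
    ∀ {A B : Type} (s : Syn Token Kind Var A) (c : Ctx Token Kind Var A B)
      (l₀ : List Token) (u : A) (w : B), InSNF env k s → Rest kd env c l₀ u w →
      ∀ (t : Token) (l : List Token), l₀ = t :: l → kd t = k →
      HasConflict env (unfocus s c)
  | _, _, s, Ctx.nil, l₀, u, w, hs, hr, t, l, heq, hk => by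
    obtain ⟨rfl, -⟩ := rest_nil_inv hr
    simp at heq
  | _, _, s, Ctx.cons (Layer.apply f) c, l₀, u, w, hs, hr, t, l, heq, hk =>
    snf_rest_conflict (Syn.map f s) c l₀ (f u) w (InSNF.map f hs)
      (rest_apply_inv hr) t l heq hk
  | _, _, s, Ctx.cons (Layer.prepend v') c, l₀, u, w, hs, hr, t, l, heq, hk =>
    snf_rest_conflict (Syn.seqn (Syn.eps v') s) c l₀ (v', u) w
      (InSNF.seqnR (Productive.eps v') hs) (rest_prepend_inv hr) t l heq hk
  | _, _, s, Ctx.cons (Layer.followBy s') c, l₀, u, w, hs, hr, t, l, heq, hk => by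
    subst heq
    obtain ⟨lb, l₂', u', heq2, hmb, hr'⟩ := rest_followBy_inv hr
    cases lb with
    | nil =>
      exact snf_rest_conflict (Syn.seqn s s') c l₂' (u, u') w
        (InSNF.seqnL hs (matches_nil_nullable hmb rfl)) hr' t l (by simpa using heq2.symm) hk
    | cons a lb' =>
      obtain ⟨rfl, -⟩ : a = t ∧ lb' ++ l₂' = l := by simpa using heq2.symm
      exact conflict_unfocus _ c (HasConflict.seqnSF hs (hk ▸ matches_cons_first hmb a lb' rfl))

end
theorem pierce_correct
    (nullOpt : ∀ {A : Type}, Syn Token Kind Var A → Option A)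
    (hnull : ∀ {A : Type} (s : Syn Token Kind Var A), ¬ HasConflict env s →
      ∀ v : A, nullOpt s = some v ↔ Nullable env s v)
    (pierce : ∀ {A B : Type}, Kind → Syn Token Kind Var A → Ctx Token Kind Var A B →
      Ctx Token Kind Var Token B)
    (hpierce_elem : ∀ {B : Type} (k : Kind) (c : Ctx Token Kind Var Token B),
      pierce k (Syn.elem k) c = c)
    (hpierce_disj₁ : ∀ {A B : Type} (k : Kind) (s₁ s₂ : Syn Token Kind Var A)
      (c : Ctx Token Kind Var A B),
      ¬ HasConflict env (Syn.disj s₁ s₂) → InFirst env k (Syn.disj s₁ s₂) →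
      InFirst env k s₁ → pierce k (Syn.disj s₁ s₂) c = pierce k s₁ c)
    (hpierce_disj₂ : ∀ {A B : Type} (k : Kind) (s₁ s₂ : Syn Token Kind Var A)
      (c : Ctx Token Kind Var A B),
      ¬ HasConflict env (Syn.disj s₁ s₂) → InFirst env k (Syn.disj s₁ s₂) →
      ¬ InFirst env k s₁ → pierce k (Syn.disj s₁ s₂) c = pierce k s₂ c)
    (hpierce_seqn₁ : ∀ {A B C : Type} (k : Kind) (s₁ : Syn Token Kind Var A)
      (s₂ : Syn Token Kind Var B) (c : Ctx Token Kind Var (A × B) C),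
      ¬ HasConflict env (Syn.seqn s₁ s₂) → InFirst env k (Syn.seqn s₁ s₂) →
      (nullOpt s₁ = none ∨ InFirst env k s₁) →
      pierce k (Syn.seqn s₁ s₂) c = pierce k s₁ (Ctx.cons (Layer.followBy s₂) c))
    (hpierce_seqn₂ : ∀ {A B C : Type} (k : Kind) (s₁ : Syn Token Kind Var A)
      (s₂ : Syn Token Kind Var B) (c : Ctx Token Kind Var (A × B) C) (v : A),
      ¬ HasConflict env (Syn.seqn s₁ s₂) → InFirst env k (Syn.seqn s₁ s₂) →
      nullOpt s₁ = some v → ¬ InFirst env k s₁ →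
      pierce k (Syn.seqn s₁ s₂) c = pierce k s₂ (Ctx.cons (Layer.prepend v) c))
    (hpierce_map : ∀ {A B C : Type} (k : Kind) (f : A → B) (s : Syn Token Kind Var A)
      (c : Ctx Token Kind Var B C),
      ¬ HasConflict env (Syn.map f s) → InFirst env k (Syn.map f s) →
      pierce k (Syn.map f s) c = pierce k s (Ctx.cons (Layer.apply f) c))
    (hpierce_var : ∀ {A B : Type} (k : Kind) (x : Var A) (c : Ctx Token Kind Var A B),
      ¬ HasConflict env (Syn.var x : Syn Token Kind Var A) →
      InFirst env k (Syn.var x : Syn Token Kind Var A) →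
      pierce k (Syn.var x) c = pierce k (env A x) c)
    {A B : Type} (s : Syn Token Kind Var A) (c : Ctx Token Kind Var A B)
    (t : Token) (k : Kind) (hk : kd t = k)
    (hll1 : ¬ HasConflict env (unfocus s c)) (hf : InFirst env k s)
    (ts : List Token) (v : B) :
    Matches kd env (unfocus (Syn.elem k) (pierce k s c)) (t :: ts) v ↔
      Matches kd env (unfocus s c) (t :: ts) v := by
  revert hll1
  induction hf generalizing ts v with
  | elem =>
    intro hll1
    rw [hpierce_elem]
  | @disjL A' k' s₁ s₂ hf₁ ih =>
    intro hll1
    have hcd : ¬ HasConflict env (Syn.disj s₁ s₂) := fun h => hll1 (conflict_unfocus _ c h)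
    have hll1' : ¬ HasConflict env (unfocus s₁ c) :=
      fun h => hll1 ((refines_unfocus c refines_disjL).2.2.2.2 h)
    rw [hpierce_disj₁ _ s₁ s₂ c hcd (InFirst.disjL hf₁) hf₁]
    refine (ih c hk ts v hll1').trans ?_
    constructor
    · exact matches_unfocus_mono c (fun l w h => Matches.disjL h)
    · intro hm
      rw [matches_unfocus_iff] at hm ⊢
      obtain ⟨l₁, l₂, u, heq, hm, hr⟩ := hm
      cases l₁ with
      | nil =>
        exfalso
        have hn := matches_nil_nullable hm rfl
        have hsnf := nullable_first_snf (InFirst.disjL hf₁) hcd u hn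
        exact hll1 (snf_rest_conflict _ c l₂ u v hsnf hr t ts (by simpa using heq.symm) hk)
      | cons a l₁' =>
        obtain ⟨rfl, rfl⟩ : a = t ∧ l₁' ++ l₂ = ts := by simpa using heq.symm
        cases hm with
        | disjL h => exact ⟨a :: l₁', l₂, u, heq, h, hr⟩
        | disjR h =>
          exact absurd (HasConflict.disjFF hf₁ (hk ▸ matches_cons_first h a l₁' rfl)) hcd
  | @disjR A' k' s₁ s₂ hf₂ ih =>
    intro hll1
    have hcd : ¬ HasConflict env (Syn.disj s₁ s₂) := fun h => hll1 (conflict_unfocus _ c h)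
    have hnf₁ : ¬ InFirst env k' s₁ := fun h => hcd (HasConflict.disjFF h hf₂)
    have hll1' : ¬ HasConflict env (unfocus s₂ c) :=
      fun h => hll1 ((refines_unfocus c refines_disjR).2.2.2.2 h)
    rw [hpierce_disj₂ _ s₁ s₂ c hcd (InFirst.disjR hf₂) hnf₁]
    refine (ih c hk ts v hll1').trans ?_
    constructor
    · exact matches_unfocus_mono c (fun l w h => Matches.disjR h)
    · intro hm
      rw [matches_unfocus_iff] at hm ⊢
      obtain ⟨l₁, l₂, u, heq, hm, hr⟩ := hm
      cases l₁ with
      | nil =>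
        exfalso
        have hn := matches_nil_nullable hm rfl
        have hsnf := nullable_first_snf (InFirst.disjR hf₂) hcd u hn
        exact hll1 (snf_rest_conflict _ c l₂ u v hsnf hr t ts (by simpa using heq.symm) hk)
      | cons a l₁' =>
        obtain ⟨rfl, rfl⟩ : a = t ∧ l₁' ++ l₂ = ts := by simpa using heq.symm
        cases hm with
        | disjR h => exact ⟨a :: l₁', l₂, u, heq, h, hr⟩
        | disjL h =>
          exact absurd (hk ▸ matches_cons_first h a l₁' rfl) hnf₁
  | @seqnL A' B' k' s₁ s₂ hf₁ hp₂ ih =>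
    intro hll1
    have hcs : ¬ HasConflict env (Syn.seqn s₁ s₂) := fun h => hll1 (conflict_unfocus _ c h)
    rw [hpierce_seqn₁ _ s₁ s₂ c hcs (InFirst.seqnL hf₁ hp₂) (Or.inr hf₁)]
    exact ih (Ctx.cons (Layer.followBy s₂) c) hk ts v hll1
  | @seqnR A' B' k' s₁ s₂ v₁ hn₁ hf₂ ih =>
    intro hll1
    have hcs : ¬ HasConflict env (Syn.seqn s₁ s₂) := fun h => hll1 (conflict_unfocus _ c h)
    have hc₁ : ¬ HasConflict env s₁ := fun h => hcs (HasConflict.seqnL h)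
    by_cases hf₁ : InFirst env k' s₁
    · exact absurd (HasConflict.seqnSF (nullable_first_snf hf₁ hc₁ _ hn₁) hf₂) hcs
    · have hno : nullOpt s₁ = some v₁ := (hnull s₁ hc₁ v₁).2 hn₁
      rw [hpierce_seqn₂ _ s₁ s₂ c v₁ hcs (InFirst.seqnR hn₁ hf₂) hno hf₁]
      have hll1' : ¬ HasConflict env (unfocus (Syn.seqn (Syn.eps v₁) s₂) c) :=
        fun h => hll1 ((refines_unfocus c (refines_epsSeqn hn₁ s₂)).2.2.2.2 h)
      refine (ih (Ctx.cons (Layer.prepend v₁) c) hk ts v hll1').trans ?_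
      show Matches kd env (unfocus (Syn.seqn (Syn.eps v₁) s₂) c) (t :: ts) v ↔ _
      constructor
      · refine matches_unfocus_mono c (fun l w h => ?_)
        obtain ⟨w1, w2⟩ := w
        obtain ⟨la, lb, rfl, h1, h2⟩ := matches_seqn_inv h
        obtain ⟨rfl, rfl⟩ : la = [] ∧ w1 = v₁ := by cases h1; exact ⟨rfl, rfl⟩
        exact Matches.seqn (nullable_matches hn₁) h2
      · intro hm
        rw [matches_unfocus_iff] at hm ⊢
        obtain ⟨l₁, l₂, u, heq, hm, hr⟩ := hm
        obtain ⟨u1, u2⟩ := u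
        obtain ⟨la, lb, rfl, h1, h2⟩ := matches_seqn_inv hm
        cases la with
        | nil =>
          have hu : u1 = v₁ := nullable_unique hc₁ (matches_nil_nullable h1 rfl) hn₁
          subst hu
          exact ⟨lb, l₂, (u1, u2), heq, Matches.seqn (Matches.eps u1) h2, hr⟩
        | cons a la' =>
          exfalso
          apply hf₁
          obtain ⟨rfl, -⟩ : a = t ∧ (la' ++ lb) ++ l₂ = ts := by simpa using heq.symm
          exact hk ▸ matches_cons_first h1 a la' rfl
  | @map A' B' k' f s' hfs ih =>
    intro hll1
    have hcm : ¬ HasConflict env (Syn.map f s') := fun h => hll1 (conflict_unfocus _ c h)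
    rw [hpierce_map _ f s' c hcm (InFirst.map f hfs)]
    exact ih (Ctx.cons (Layer.apply f) c) hk ts v hll1
  | @var A' k' x hfx ih =>
    intro hll1
    have hcv : ¬ HasConflict env (Syn.var x : Syn Token Kind Var A') :=
      fun h => hll1 (conflict_unfocus _ c h)
    rw [hpierce_var _ x c hcv (InFirst.var x hfx)]
    have hll1' : ¬ HasConflict env (unfocus (env A' x) c) :=
      fun h => hll1 ((refines_unfocus c (refines_var x)).2.2.2.2 h)
    refine (ih c hk ts v hll1').trans ?_
    constructor
    · exact matches_unfocus_mono c (fun l w h => Matches.var x h)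
    · refine matches_unfocus_mono c (fun l w h => ?_)
      cases h with | var _ h => exact h

end
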